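/- Multilevel construction: let S ⊆ F_2^n be a binary constant-weight code of weight k and minimum Hamming distance 2δ, and for each v ∈ S let C_v be an (F_v, |C_v|, δ)_q Ferrers diagram rank-metric code. Then the union of the lifted codes ⋃_{v∈S} L(C_v) is an (n, Σ_{v∈S}|C_v|, 2δ, {k})_q constant dimension code. -/

import Mathlib

/-- The subspace distance `d_S(U,V) = dim(U+V) - dim(U∩V)`. -/
noncomputable def sdist {F : Type*} [Field F] {n : ℕ} (U V : Submodule F (Fin n → F)) : ℕ :=
  Module.finrank F ↥(U ⊔ V) - Module.finrank F ↥(U ⊓ V)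

/-- The RREF generator matrix determined by an identifying vector (via the strictly
monotone enumerations `e` of its pivots and `c` of its non-pivots) and a Ferrers tableaux
filling `A`. -/
def liftMat {F : Type*} [Field F] {n k : ℕ} (e : Fin k → Fin n) (c : Fin (n - k) → Fin n)
    (A : Matrix (Fin k) (Fin (n - k)) F) : Matrix (Fin k) (Fin n) F :=
  fun i t => (if t = e i then 1 else 0) + ∑ j, if t = c j then A i j else 0

/-- A family of vectors with pairwise distinct "leading positions" is linearly
independent. -/
lemma li_leading {F : Type*} [Field F] {n : ℕ} {ι : Type*} (x : ι → Fin n → F)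
    (p : ι → Fin n) (hp : Function.Injective p)
    (h1 : ∀ i, x i (p i) ≠ 0) (h0 : ∀ i s, s < p i → x i s = 0) :
    LinearIndependent F x := by
  classical
  rw [linearIndependent_iff']
  intro s g hg i hi
  by_contra hgi
  obtain ⟨i₀, hi₀, hmin⟩ := (s.filter fun j => g j ≠ 0).exists_min_image p
    ⟨i, by simp [hi, hgi]⟩
  simp only [Finset.mem_filter] at hi₀
  have hval : ∑ j ∈ s, g j * x j (p i₀) = 0 := by
    have := congrFun hg (p i₀)
    simpa [Finset.sum_apply] using this
  rw [Finset.sum_eq_single_of_mem i₀ hi₀.1] at hval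
  · exact hi₀.2 ((mul_eq_zero.mp hval).resolve_right (h1 i₀))
  · intro j hj hne
    by_cases hgj : g j = 0
    · simp [hgj]
    · have hle := hmin j (Finset.mem_filter.mpr ⟨hj, hgj⟩)
      have hlt : p i₀ < p j := lt_of_le_of_ne hle fun h => hne (hp h.symm)
      rw [h0 j _ hlt, mul_zero]

theorem multilevel_construction {F : Type*} [Field F] [Fintype F] {n k δ : ℕ} (hδ : 0 < δ)
    (S : Finset (Fin n → Bool))
    (hwt : ∀ v ∈ S, (Finset.univ.filter fun j => v j = true).card = k)
    (hdH : ∀ v ∈ S, ∀ v' ∈ S, v ≠ v' →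
      2 * δ ≤ (Finset.univ.filter fun j => v j ≠ v' j).card)
    (e : (Fin n → Bool) → Fin k → Fin n) (c : (Fin n → Bool) → Fin (n - k) → Fin n)
    (he : ∀ v ∈ S, StrictMono (e v)) (hc : ∀ v ∈ S, StrictMono (c v))
    (hev : ∀ v ∈ S, ∀ i, v (e v i) = true) (hcv : ∀ v ∈ S, ∀ j, v (c v j) = false)
    (C : (Fin n → Bool) → Finset (Matrix (Fin k) (Fin (n - k)) F))
    (hsupp : ∀ v ∈ S, ∀ A ∈ C v, ∀ i j, c v j < e v i → A i j = 0)
    (hdist : ∀ v ∈ S, ∀ A ∈ C v, ∀ B ∈ C v, A ≠ B → δ ≤ (A - B).rank) :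
    (∀ v ∈ S, ∀ A ∈ C v,
      Module.finrank F ↥(Submodule.span F (Set.range (liftMat (e v) (c v) A))) = k) ∧
    (∀ v ∈ S, ∀ v' ∈ S, ∀ A ∈ C v, ∀ B ∈ C v', (v, A) ≠ (v', B) →
      Submodule.span F (Set.range (liftMat (e v) (c v) A)) ≠
        Submodule.span F (Set.range (liftMat (e v') (c v') B))) ∧
    (∀ v ∈ S, ∀ v' ∈ S, ∀ A ∈ C v, ∀ B ∈ C v', (v, A) ≠ (v', B) →
      2 * δ ≤ sdist (Submodule.span F (Set.range (liftMat (e v) (c v) A)))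
        (Submodule.span F (Set.range (liftMat (e v') (c v') B)))) := by
  classical
  -- pivots and non-pivots are distinct
  have hne' : ∀ v ∈ S, ∀ (i : Fin k) (j : Fin (n - k)), e v i ≠ c v j := by
    intro v hv i j h
    have h1 := hev v hv i
    rw [h, hcv v hv j] at h1
    exact Bool.false_ne_true h1
  -- leading coefficient of each row is 1, at position `e v i`
  have hMlead1 : ∀ v ∈ S, ∀ (A : Matrix (Fin k) (Fin (n - k)) F) (i : Fin k),
      liftMat (e v) (c v) A i (e v i) = 1 := by
    intro v hv A i
    unfold liftMat
    rw [if_pos rfl, Finset.sum_eq_zero, add_zero]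
    intro j _
    exact if_neg (hne' v hv i j)
  have hMlead0 : ∀ v ∈ S, ∀ A ∈ C v, ∀ (i : Fin k) (s : Fin n), s < e v i →
      liftMat (e v) (c v) A i s = 0 := by
    intro v hv A hA i s hs
    unfold liftMat
    rw [if_neg hs.ne, Finset.sum_eq_zero, add_zero]
    intro j _
    by_cases h : s = c v j
    · rw [if_pos h]
      exact hsupp v hv A hA i j (h ▸ hs)
    · exact if_neg h
  -- values of rows at pivot positions
  have hMe : ∀ v ∈ S, ∀ (A : Matrix (Fin k) (Fin (n - k)) F) (i i' : Fin k),
      liftMat (e v) (c v) A i (e v i') = if i' = i then 1 else 0 := by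
    intro v hv A i i'
    unfold liftMat
    rw [Finset.sum_eq_zero (fun j _ => if_neg (hne' v hv i' j)), add_zero]
    by_cases h : i' = i
    · subst h; simp
    · rw [if_neg fun hh => h ((he v hv).injective hh), if_neg h]
  -- the rows are linearly independent
  have hLI : ∀ v ∈ S, ∀ A ∈ C v, LinearIndependent F (liftMat (e v) (c v) A) := by
    intro v hv A hA
    exact li_leading _ (e v) (he v hv).injective
      (fun i => by rw [hMlead1 v hv A i]; exact one_ne_zero)
      (fun i s hs => hMlead0 v hv A hA i s hs)
  have hrank : ∀ v ∈ S, ∀ A ∈ C v,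
      Module.finrank F ↥(Submodule.span F (Set.range (liftMat (e v) (c v) A))) = k := by
    intro v hv A hA
    rw [finrank_span_eq_card (hLI v hv A hA), Fintype.card_fin]
  -- evaluating a combination of rows at a pivot recovers the coefficient
  have heval : ∀ v ∈ S, ∀ (A : Matrix (Fin k) (Fin (n - k)) F) (y : Fin k → F) (i : Fin k),
      (∑ i', y i' • liftMat (e v) (c v) A i') (e v i) = y i := by
    intro v hv A y i
    rw [Finset.sum_apply]
    simp only [Pi.smul_apply, smul_eq_mul]
    simp [hMe v hv A _ i, mul_ite]
  -- key bound on the dimension of the sum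
  have hkey : ∀ v ∈ S, ∀ v' ∈ S, ∀ A ∈ C v, ∀ B ∈ C v', (v, A) ≠ (v', B) →
      k + δ ≤ Module.finrank F ↥(Submodule.span F (Set.range (liftMat (e v) (c v) A)) ⊔
        Submodule.span F (Set.range (liftMat (e v') (c v') B))) := by
    intro v hv v' hv' A hA B hB hpair
    by_cases hvv : v = v'
    · -- same identifying vector, different matrices: rank-distance argument
      subst hvv
      have hAB : A ≠ B := fun h => hpair (by rw [h])
      set M : Matrix (Fin k) (Fin n) F := liftMat (e v) (c v) A with hM
      set M' : Matrix (Fin k) (Fin n) F := liftMat (e v) (c v) B with hM'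
      set D : Matrix (Fin k) (Fin (n - k)) F := A - B with hD
      -- the embedding of the `c`-columns
      let φ : (Fin (n - k) → F) →ₗ[F] (Fin n → F) :=
        { toFun := fun x t => ∑ j, if t = c v j then x j else 0
          map_add' := by
            intro x y
            funext t
            simp only [Pi.add_apply, ← Finset.sum_add_distrib]
            exact Finset.sum_congr rfl fun j _ => by split <;> simp
          map_smul' := by
            intro a x
            funext t
            simp only [RingHom.id_apply, Pi.smul_apply, smul_eq_mul, Finset.mul_sum]
            exact Finset.sum_congr rfl fun j _ => by split <;> simp }
      have hφval : ∀ (x : Fin (n - k) → F) (j : Fin (n - k)), φ x (c v j) = x j := by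
        intro x j
        show (∑ j', if c v j = c v j' then x j' else 0) = x j
        rw [Finset.sum_eq_single_of_mem j (Finset.mem_univ j)]
        · rw [if_pos rfl]
        · intro j' _ hj'
          exact if_neg fun h => hj' ((hc v hv).injective h).symm
      have hφinj : Function.Injective φ := by
        intro x y h
        funext j
        rw [← hφval x j, ← hφval y j, h]
      have hNdiff : ∀ i, φ (D i) = M i - M' i := by
        intro i
        funext t
        show (∑ j, if t = c v j then D i j else 0) = M i t - M' i t
        rw [hM, hM']
        unfold liftMat
        have : ∀ j : Fin (n - k), (if t = c v j then D i j else 0) =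
            (if t = c v j then A i j else 0) - (if t = c v j then B i j else 0) := by
          intro j
          split <;> simp [hD, Matrix.sub_apply]
        rw [Finset.sum_congr rfl fun j _ => this j, Finset.sum_sub_distrib]
        ring
      set W2 : Submodule F (Fin n → F) := Submodule.span F (Set.range (φ ∘ D)) with hW2
      have hW2sub : W2 ≤ Submodule.span F (Set.range M) ⊔ Submodule.span F (Set.range M') := by
        rw [hW2, Submodule.span_le]
        rintro _ ⟨i, rfl⟩
        show φ (D i) ∈ _
        rw [hNdiff i]
        exact sub_mem (Submodule.mem_sup_left (Submodule.subset_span ⟨i, rfl⟩))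
          (Submodule.mem_sup_right (Submodule.subset_span ⟨i, rfl⟩))
      have hW2e : ∀ x ∈ W2, ∀ i : Fin k, x (e v i) = 0 := by
        have hker : W2 ≤ LinearMap.ker (LinearMap.funLeft F F (e v)) := by
          rw [hW2, Submodule.span_le]
          rintro _ ⟨i, rfl⟩
          rw [SetLike.mem_coe, LinearMap.mem_ker]
          funext i'
          show φ (D i) (e v i') = 0
          show (∑ j, if e v i' = c v j then D i j else 0) = 0
          exact Finset.sum_eq_zero fun j _ => if_neg (hne' v hv i' j)
        intro x hx i
        have := hker hx
        rw [LinearMap.mem_ker] at this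
        exact congrFun this i
      have hinf : Submodule.span F (Set.range M) ⊓ W2 = ⊥ := by
        rw [eq_bot_iff]
        rintro x ⟨hxU, hxW⟩
        obtain ⟨y, hy⟩ := Submodule.mem_span_range_iff_exists_fun F |>.mp hxU
        have hy0 : ∀ i, y i = 0 := by
          intro i
          rw [← heval v hv A y i, hy]
          exact hW2e x hxW i
        rw [Submodule.mem_bot, ← hy]
        exact Finset.sum_eq_zero fun i _ => by rw [hy0 i, zero_smul]
      have hfin2 : Module.finrank F ↥W2 = D.rank := by
        have h1 : W2 = Submodule.map φ (Submodule.span F (Set.range D)) := by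
          rw [hW2, Submodule.map_span]
          exact congrArg (Submodule.span F) (Set.range_comp (⇑φ) (D : Fin k → Fin (n - k) → F))
        rw [h1, ← (Submodule.equivMapOfInjective φ hφinj
          (Submodule.span F (Set.range D))).finrank_eq, Matrix.rank_eq_finrank_span_row]
        rfl
      have hsum := Submodule.finrank_sup_add_finrank_inf_eq
        (Submodule.span F (Set.range M)) W2
      rw [hinf, finrank_bot, add_zero, hrank v hv A hA, hfin2] at hsum
      have hle : Submodule.span F (Set.range M) ⊔ W2 ≤
          Submodule.span F (Set.range M) ⊔ Submodule.span F (Set.range M') :=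
        sup_le le_sup_left hW2sub
      have hmono := Submodule.finrank_mono hle
      have hdelta := hdist v hv A hA B hB hAB
      rw [← hD] at hdelta
      omega
    · -- different identifying vectors: Hamming distance argument
      set sv := Finset.univ.filter (fun j => v j = true) with hsv
      set sv' := Finset.univ.filter (fun j => v' j = true) with hsv'
      have himg : ∀ w, w ∈ S → Finset.univ.image (e w) =
          Finset.univ.filter (fun j => w j = true) := by
        intro w hw
        apply Finset.eq_of_subset_of_card_le
        · intro t ht
          obtain ⟨i, _, rfl⟩ := Finset.mem_image.mp ht
          exact Finset.mem_filter.mpr ⟨Finset.mem_univ _, hev w hw i⟩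
        · rw [hwt w hw, Finset.card_image_of_injective _ (he w hw).injective,
            Finset.card_univ, Fintype.card_fin]
      have hexists : ∀ t ∈ sv ∪ sv', ∃ w : Fin n → F,
          w ∈ Submodule.span F (Set.range (liftMat (e v) (c v) A)) ⊔
            Submodule.span F (Set.range (liftMat (e v') (c v') B)) ∧
          w t = 1 ∧ ∀ s < t, w s = 0 := by
        intro t ht
        rcases Finset.mem_union.mp ht with h | h
        · have : t ∈ Finset.univ.image (e v) := by rw [himg v hv]; exact h
          obtain ⟨i, _, rfl⟩ := Finset.mem_image.mp this
          exact ⟨liftMat (e v) (c v) A i,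
            Submodule.mem_sup_left (Submodule.subset_span ⟨i, rfl⟩),
            hMlead1 v hv A i, fun s hs => hMlead0 v hv A hA i s hs⟩
        · have : t ∈ Finset.univ.image (e v') := by rw [himg v' hv']; exact h
          obtain ⟨i, _, rfl⟩ := Finset.mem_image.mp this
          exact ⟨liftMat (e v') (c v') B i,
            Submodule.mem_sup_right (Submodule.subset_span ⟨i, rfl⟩),
            hMlead1 v' hv' B i, fun s hs => hMlead0 v' hv' B hB i s hs⟩
      set P := sv ∪ sv' with hP
      let x : {t // t ∈ P} → Fin n → F := fun t => (hexists t.1 t.2).choose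
      have hxspec : ∀ t : {t // t ∈ P},
          x t ∈ Submodule.span F (Set.range (liftMat (e v) (c v) A)) ⊔
            Submodule.span F (Set.range (liftMat (e v') (c v') B)) ∧
          x t t.1 = 1 ∧ ∀ s < t.1, x t s = 0 := fun t => (hexists t.1 t.2).choose_spec
      have hxli : LinearIndependent F x :=
        li_leading x (fun t => t.1) Subtype.val_injective
          (fun t => by rw [(hxspec t).2.1]; exact one_ne_zero)
          (fun t s hs => (hxspec t).2.2 s hs)
      have hxle : Submodule.span F (Set.range x) ≤
          Submodule.span F (Set.range (liftMat (e v) (c v) A)) ⊔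
            Submodule.span F (Set.range (liftMat (e v') (c v') B)) := by
        rw [Submodule.span_le]
        rintro _ ⟨t, rfl⟩
        exact (hxspec t).1
      have hxcard : Module.finrank F ↥(Submodule.span F (Set.range x)) = P.card := by
        rw [finrank_span_eq_card hxli, Fintype.card_coe]
      have hmono := Submodule.finrank_mono hxle
      rw [hxcard] at hmono
      -- counting: |sv ∪ sv'| ≥ k + δ
      have hd : (Finset.univ.filter fun j => v j ≠ v' j) = (sv \ sv') ∪ (sv' \ sv) := by
        ext j
        rw [hsv, hsv']
        cases hv1 : v j <;> cases hv2 : v' j <;>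
          simp [hv1, hv2, Finset.mem_filter, Finset.mem_union, Finset.mem_sdiff]
      have hdcard : (Finset.univ.filter fun j => v j ≠ v' j).card =
          (sv \ sv').card + (sv' \ sv).card := by
        rw [hd, Finset.card_union_of_disjoint disjoint_sdiff_sdiff]
      have h1 : (sv \ sv').card + (sv ∩ sv').card = sv.card :=
        Finset.card_sdiff_add_card_inter sv sv'
      have h2 : (sv' \ sv).card + (sv ∩ sv').card = sv'.card := by
        rw [Finset.inter_comm]
        exact Finset.card_sdiff_add_card_inter sv' sv
      have h3 : (sv' \ sv).card + sv.card = P.card := by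
        rw [hP, Finset.union_comm]
        exact Finset.card_sdiff_add_card sv' sv
      have h4 := hdH v hv v' hv' hvv
      have h5 : sv.card = k := hwt v hv
      have h6 : sv'.card = k := hwt v' hv'
      omega
  -- dimension formula
  have hform : ∀ v ∈ S, ∀ v' ∈ S, ∀ A ∈ C v, ∀ B ∈ C v',
      Module.finrank F ↥(Submodule.span F (Set.range (liftMat (e v) (c v) A)) ⊔
        Submodule.span F (Set.range (liftMat (e v') (c v') B))) +
      Module.finrank F ↥(Submodule.span F (Set.range (liftMat (e v) (c v) A)) ⊓
        Submodule.span F (Set.range (liftMat (e v') (c v') B))) = k + k := by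
    intro v hv v' hv' A hA B hB
    have h := Submodule.finrank_sup_add_finrank_inf_eq
      (Submodule.span F (Set.range (liftMat (e v) (c v) A)))
      (Submodule.span F (Set.range (liftMat (e v') (c v') B)))
    rw [hrank v hv A hA, hrank v' hv' B hB] at h
    exact h
  have h3 : ∀ v ∈ S, ∀ v' ∈ S, ∀ A ∈ C v, ∀ B ∈ C v', (v, A) ≠ (v', B) →
      2 * δ ≤ sdist (Submodule.span F (Set.range (liftMat (e v) (c v) A)))
        (Submodule.span F (Set.range (liftMat (e v') (c v') B))) := by
    intro v hv v' hv' A hA B hB hpair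
    have hk := hkey v hv v' hv' A hA B hB hpair
    have hs := hform v hv v' hv' A hA B hB
    unfold sdist
    omega
  refine ⟨hrank, ?_, h3⟩
  intro v hv v' hv' A hA B hB hpair heq
  have := h3 v hv v' hv' A hA B hB hpair
  rw [heq] at this
  unfold sdist at this
  rw [sup_idem, inf_idem] at this
  omega
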